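/- For every n ≥ 4, the graph K₂ + M_{n−2} contains no subgraph isomorphic to the disjoint union C₃ ∪̇ Θ₄ of a triangle and the graph Θ₄ (a 4-cycle with a chord). -/

import Mathlib

/-- `M t`: the matching on `t` vertices. -/
def matchingGraph (t : ℕ) : SimpleGraph (Fin t) :=
  SimpleGraph.fromRel (fun i j => (i : ℕ) / 2 = (j : ℕ) / 2)

/-- The join `G + H` of two graphs. -/
def joinGraph {α β : Type} (G : SimpleGraph α) (H : SimpleGraph β) :
    SimpleGraph (α ⊕ β) :=
  SimpleGraph.fromRel (fun x y =>
    match x, y with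
    | Sum.inl a, Sum.inl b => G.Adj a b
    | Sum.inr a, Sum.inr b => H.Adj a b
    | _, _ => True)

/-- Θ₄ : the 4-cycle 0-1-2-3-0 with the chord 0-2, i.e. K₄ minus the edge 1-3. -/
def theta4 : SimpleGraph (Fin 4) :=
  (SimpleGraph.completeGraph (Fin 4)).deleteEdges {s(1, 3)}

/-- C₃ ∪̇ Θ₄ : the vertex-disjoint union of a triangle and Θ₄. -/
def c3Theta4 : SimpleGraph (Fin 3 ⊕ Fin 4) :=
  SimpleGraph.fromRel (fun x y =>
    match x, y with
    | Sum.inl a, Sum.inl b => a ≠ b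
    | Sum.inr a, Sum.inr b => theta4.Adj a b
    | _, _ => False)

/-- `G` contains `H` as a subgraph: there is an injective graph homomorphism H → G. -/
def Contains {V W : Type} (G : SimpleGraph V) (H : SimpleGraph W) : Prop :=
  ∃ φ : H →g G, Function.Injective φ

/-- In a matching there is no path of length two. -/
lemma matching_no_path {t : ℕ} {a b c : Fin t} (h1 : (matchingGraph t).Adj a b)
    (h2 : (matchingGraph t).Adj b c) (hac : a ≠ c) : False := by
  simp only [matchingGraph, SimpleGraph.fromRel_adj, ne_eq, Fin.ext_iff] at h1 h2
  simp only [ne_eq, Fin.ext_iff] at hac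
  omega

/-- Adjacency on the right side of a join comes from the right graph. -/
lemma join_adj_inr {α β : Type} {G : SimpleGraph α} {H : SimpleGraph β} {a b : β}
    (h : (joinGraph G H).Adj (Sum.inr a) (Sum.inr b)) : H.Adj a b := by
  simp only [joinGraph, SimpleGraph.fromRel_adj] at h
  rcases h.2 with h' | h'
  · exact h'
  · exact h'.symm

/-- For every n ≥ 4, K₂ + M_{n−2} contains no subgraph isomorphic to
the disjoint union C₃ ∪̇ Θ₄. -/
theorem stmt3 (n : ℕ) (hn : 4 ≤ n) :
    ¬ Contains (joinGraph (SimpleGraph.completeGraph (Fin 2)) (matchingGraph (n - 2))) c3Theta4 := by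
  rintro ⟨φ, hinj⟩
  -- three distinct vertices cannot all map to the left (K₂) side
  have key : ∀ s1 s2 s3 : Fin 3 ⊕ Fin 4, s1 ≠ s2 → s1 ≠ s3 → s2 ≠ s3 →
      ∀ a1 a2 a3 : Fin 2, φ s1 = Sum.inl a1 → φ s2 = Sum.inl a2 → φ s3 = Sum.inl a3 →
      False := by
    intro s1 s2 s3 h12 h13 h23 a1 a2 a3 e1 e2 e3
    have d12 : a1 ≠ a2 := fun h => h12 (hinj (by rw [e1, e2, h]))
    have d13 : a1 ≠ a3 := fun h => h13 (hinj (by rw [e1, e3, h]))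
    have d23 : a2 ≠ a3 := fun h => h23 (hinj (by rw [e2, e3, h]))
    simp only [ne_eq, Fin.ext_iff] at d12 d13 d23
    have l1 := a1.isLt
    have l2 := a2.isLt
    have l3 := a3.isLt
    omega
  -- adjacency transported to the matching side
  have madj : ∀ (x y : Fin 3 ⊕ Fin 4) (bx bz : Fin (n - 2)), c3Theta4.Adj x y →
      φ x = Sum.inr bx → φ y = Sum.inr bz → (matchingGraph (n - 2)).Adj bx bz := by
    intro x y bx bz hadj ex ey
    have h := φ.map_adj hadj
    rw [ex, ey] at h
    exact join_adj_inr h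
  have mne : ∀ (x y : Fin 3 ⊕ Fin 4) (bx bz : Fin (n - 2)), x ≠ y →
      φ x = Sum.inr bx → φ y = Sum.inr bz → bx ≠ bz := by
    intro x y bx bz hxy ex ey h
    exact hxy (hinj (by rw [ex, ey, h]))
  -- a path of length two (with distinct endpoints) cannot map entirely to the right side
  have tri : ∀ (x y z : Fin 3 ⊕ Fin 4), c3Theta4.Adj x y → c3Theta4.Adj y z → x ≠ z →
      ∀ bx bY bz : Fin (n - 2), φ x = Sum.inr bx → φ y = Sum.inr bY → φ z = Sum.inr bz →
      False := by
    intro x y z hxy hyz hxz bx bY bz ex ey ez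
    exact matching_no_path (madj x y bx bY hxy ex ey) (madj y z bY bz hyz ey ez)
      (mne x z bx bz hxz ex ez)
  -- adjacency facts in c3Theta4
  have A01 : c3Theta4.Adj (Sum.inr 0) (Sum.inr 1) := by
    simp [c3Theta4, theta4, SimpleGraph.fromRel_adj]
  have A12 : c3Theta4.Adj (Sum.inr 1) (Sum.inr 2) := by
    simp [c3Theta4, theta4, SimpleGraph.fromRel_adj]
  have A23 : c3Theta4.Adj (Sum.inr 2) (Sum.inr 3) := by
    simp [c3Theta4, theta4, SimpleGraph.fromRel_adj]
  have A30 : c3Theta4.Adj (Sum.inr 3) (Sum.inr 0) := by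
    simp [c3Theta4, theta4, SimpleGraph.fromRel_adj]
  have B01 : c3Theta4.Adj (Sum.inl 0) (Sum.inl 1) := by
    simp [c3Theta4, theta4, SimpleGraph.fromRel_adj]
  have B12 : c3Theta4.Adj (Sum.inl 1) (Sum.inl 2) := by
    simp [c3Theta4, theta4, SimpleGraph.fromRel_adj]
  -- Step A: some vertex of the triangle maps to the left side
  have hA : ∃ (i : Fin 3) (a : Fin 2), φ (Sum.inl i) = Sum.inl a := by
    by_contra h
    push_neg at h
    have getr : ∀ i : Fin 3, ∃ b, φ (Sum.inl i) = Sum.inr b := by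
      intro i
      rcases hi : φ (Sum.inl i) with a | b
      · exact absurd hi (h i a)
      · exact ⟨b, rfl⟩
    obtain ⟨b0, e0⟩ := getr 0
    obtain ⟨b1, e1⟩ := getr 1
    obtain ⟨b2, e2⟩ := getr 2
    exact tri (Sum.inl 0) (Sum.inl 1) (Sum.inl 2) B01 B12 (by simp) b0 b1 b2 e0 e1 e2
  obtain ⟨i, a, ha⟩ := hA
  -- main case analysis on the images of the Θ₄ vertices 0 and 2
  rcases h0 : φ (Sum.inr 0) with a0 | b0 <;> rcases h2 : φ (Sum.inr 2) with a2 | b2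
  · exact key (Sum.inl i) (Sum.inr 0) (Sum.inr 2) (by simp) (by simp) (by simp)
      a a0 a2 ha h0 h2
  · -- w0 on the left, w2 on the right: then w1, w3 must be on the right, contradiction
    rcases h1 : φ (Sum.inr 1) with a1 | b1
    · exact key (Sum.inl i) (Sum.inr 0) (Sum.inr 1) (by simp) (by simp) (by simp)
        a a0 a1 ha h0 h1
    · rcases h3 : φ (Sum.inr 3) with a3 | b3
      · exact key (Sum.inl i) (Sum.inr 0) (Sum.inr 3) (by simp) (by simp) (by simp)
          a a0 a3 ha h0 h3
      · exact tri (Sum.inr 1) (Sum.inr 2) (Sum.inr 3) A12 A23 (by simp) b1 b2 b3 h1 h2 h3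
  · -- w2 on the left, w0 on the right
    rcases h1 : φ (Sum.inr 1) with a1 | b1
    · exact key (Sum.inl i) (Sum.inr 2) (Sum.inr 1) (by simp) (by simp) (by simp)
        a a2 a1 ha h2 h1
    · rcases h3 : φ (Sum.inr 3) with a3 | b3
      · exact key (Sum.inl i) (Sum.inr 2) (Sum.inr 3) (by simp) (by simp) (by simp)
          a a2 a3 ha h2 h3
      · exact tri (Sum.inr 3) (Sum.inr 0) (Sum.inr 1) A30 A01 (by simp) b3 b0 b1 h3 h0 h1
  · -- w0 and w2 both on the right
    rcases h1 : φ (Sum.inr 1) with a1 | b1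
    · rcases h3 : φ (Sum.inr 3) with a3 | b3
      · exact key (Sum.inl i) (Sum.inr 1) (Sum.inr 3) (by simp) (by simp) (by simp)
          a a1 a3 ha h1 h3
      · exact tri (Sum.inr 2) (Sum.inr 3) (Sum.inr 0) A23 A30 (by simp) b2 b3 b0 h2 h3 h0
    · exact tri (Sum.inr 0) (Sum.inr 1) (Sum.inr 2) A01 A12 (by simp) b0 b1 b2 h0 h1 h2
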